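/- arXiv:1009.4510 — 3 statements merged into one kernel-verified Lean document; each statement's English description precedes it below -/
import Mathlib

section
/- For n ≥ 4, every interval of P_n of length at most 3 other than [0̂,1̂] is an interval of one of the two butterfly subposets; in particular, if τ is a triple assignment of P_n, then its restriction to either butterfly subposet P or Q satisfies the hypothesis that every interval of rank at most 3 has a unique rising chain. -/
open Finset

section ChainDefs
variable {α : Type*} [PartialOrder α]

/-- `l` is a saturated (maximal) chain from `x` to `y`, given as a list. -/
def SatChain (x y : α) (l : List α) : Prop :=
  l.Chain' (· ⋖ ·) ∧ l.head? = some x ∧ l.getLast? = some y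

/-- A chain is rising for `τ` (where `true` codes the letter 𝐚 and `false` codes 𝐛)
if every consecutive triple is mapped to 𝐚. -/
def RisingOn (τ : α → α → α → Bool) (l : List α) : Prop :=
  ∀ (i : ℕ) (h : i + 2 < l.length),
    τ (l.get ⟨i, by omega⟩) (l.get ⟨i + 1, by omega⟩) (l.get ⟨i + 2, by omega⟩) = true

/-- A triple assignment: every non-trivial interval has a unique rising maximal chain. -/
def IsTripleAssignment (τ : α → α → α → Bool) : Prop :=
  ∀ x y : α, x < y → ∃! l : List α, SatChain x y l ∧ RisingOn τ l

/-- An `R`-labeling with label set `Λ` and relation `sim`: every non-trivial interval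
has a unique maximal chain whose successive labels are related by `sim`. -/
def IsRLabeling {Λ : Type*} (sim : Λ → Λ → Prop) (lab : α → α → Λ) : Prop :=
  ∀ x y : α, x < y → ∃! l : List α,
    SatChain x y l ∧ ∀ (i : ℕ) (h : i + 2 < l.length),
      sim (lab (l.get ⟨i, by omega⟩) (l.get ⟨i + 1, by omega⟩))
          (lab (l.get ⟨i + 1, by omega⟩) (l.get ⟨i + 2, by omega⟩))

/-- `y` is a breakpoint for `τ`: the value `τ x y z` does not depend on `x ⋖ y` and `y ⋖ z`. -/
def IsBreakpoint (τ : α → α → α → Bool) (y : α) : Prop :=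
  ∃ v : Bool, ∀ x z : α, x ⋖ y → y ⋖ z → τ x y z = v

end ChainDefs

section FlagDefs
variable {α : Type*} [PartialOrder α] [BoundedOrder α]

/-- `rk` is a rank function making the bounded poset graded. -/
def IsGraded (rk : α → ℕ) : Prop :=
  rk ⊥ = 0 ∧ ∀ x y : α, x ⋖ y → rk y = rk x + 1

/-- Flag `f`-vector entry: the number of chains `0̂ < x₁ < ⋯ < x_k < 1̂`
passing exactly through the ranks in `S`. -/
noncomputable def flagF (rk : α → ℕ) (S : Finset ℕ) : ℕ :=
  Nat.card {c : Finset α // IsChain (· ≤ ·) (↑c : Set α) ∧ c.image rk = S ∧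
    c.card = S.card ∧ ∀ x ∈ c, ⊥ < x ∧ x < ⊤}

/-- Flag `h`-vector entry: `h_S = ∑_{T ⊆ S} (-1)^{|S∖T|} f_T`. -/
noncomputable def flagH (rk : α → ℕ) (S : Finset ℕ) : ℤ :=
  ∑ T ∈ S.powerset, (-1) ^ (S.card - T.card) * (flagF rk T : ℤ)

/-- The descent set of a maximal chain `0̂ = x₀ ⋖ x₁ ⋖ ⋯ ⋖ x_n = 1̂` with respect to `τ`:
those `i` with `τ (x_{i-1}) (x_i) (x_{i+1}) = 𝐛`. -/
def descSet (τ : α → α → α → Bool) (l : List α) : Finset ℕ :=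
  (Finset.Icc 1 (l.length - 2)).filter
    (fun i => τ (l.getD (i - 1) ⊥) (l.getD i ⊥) (l.getD (i + 1) ⊥) = false)

end FlagDefs

/-- The butterfly poset `T_n`: one element at ranks `0` and `n` and two elements
(`side = true/false`) at each rank `1 ≤ i ≤ n-1`; any two elements of distinct
ranks are comparable. -/
structure Butt (n : ℕ) where
  rk : ℕ
  side : Bool
  hle : rk ≤ n
  hb : rk = 0 ∨ rk = n → side = false

theorem Butt.ext' {n : ℕ} {x y : Butt n} (h1 : x.rk = y.rk) (h2 : x.side = y.side) :
    x = y := by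
  cases x; cases y; simp_all

instance {n : ℕ} : PartialOrder (Butt n) where
  le x y := x = y ∨ x.rk < y.rk
  le_refl x := Or.inl rfl
  le_trans x y z hxy hyz := by
    rcases hxy with rfl | h
    · exact hyz
    · rcases hyz with rfl | h'
      · exact Or.inr h
      · exact Or.inr (h.trans h')
  le_antisymm x y hxy hyx := by
    rcases hxy with rfl | h
    · rfl
    · rcases hyx with rfl | h'
      · rfl
      · omega

instance {n : ℕ} : BoundedOrder (Butt n) where
  bot := ⟨0, false, Nat.zero_le n, fun _ => rfl⟩
  top := ⟨n, false, le_refl n, fun _ => rfl⟩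
  bot_le x := by
    by_cases h : x.rk = 0
    · exact Or.inl (Butt.ext' h.symm (x.hb (Or.inl h)).symm)
    · exact Or.inr (by simpa using Nat.pos_of_ne_zero h)
  le_top x := by
    by_cases h : x.rk = n
    · exact Or.inl (Butt.ext' h (x.hb (Or.inr h)))
    · exact Or.inr (lt_of_le_of_ne x.hle h)

/-- The poset `P_n`: two copies (`copy = true/false`) of the butterfly poset `T_n`
glued along their minimum and maximum elements. -/
structure Glue (n : ℕ) where
  rk : ℕ
  side : Bool
  copy : Bool
  hle : rk ≤ n
  hb : rk = 0 ∨ rk = n → side = false ∧ copy = false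

theorem Glue.ext' {n : ℕ} {x y : Glue n} (h1 : x.rk = y.rk) (h2 : x.side = y.side)
    (h3 : x.copy = y.copy) : x = y := by
  cases x; cases y; simp_all

instance {n : ℕ} : PartialOrder (Glue n) where
  le x y := x = y ∨ (x.rk < y.rk ∧ (x.copy = y.copy ∨ x.rk = 0 ∨ y.rk = n))
  le_refl x := Or.inl rfl
  le_trans x y z hxy hyz := by
    rcases hxy with rfl | ⟨h1, h2⟩
    · exact hyz
    · rcases hyz with rfl | ⟨h3, h4⟩
      · exact Or.inr ⟨h1, h2⟩
      · refine Or.inr ⟨h1.trans h3, ?_⟩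
        rcases h2 with hc | h0 | hn
        · rcases h4 with hc' | h0' | hn'
          · exact Or.inl (hc.trans hc')
          · omega
          · exact Or.inr (Or.inr hn')
        · exact Or.inr (Or.inl h0)
        · have := z.hle; omega
  le_antisymm x y hxy hyx := by
    rcases hxy with rfl | ⟨h1, _⟩
    · rfl
    · rcases hyx with rfl | ⟨h2, _⟩
      · rfl
      · omega

instance {n : ℕ} : BoundedOrder (Glue n) where
  bot := ⟨0, false, false, Nat.zero_le n, fun _ => ⟨rfl, rfl⟩⟩
  top := ⟨n, false, false, le_refl n, fun _ => ⟨rfl, rfl⟩⟩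
  bot_le x := by
    by_cases h : x.rk = 0
    · exact Or.inl (Glue.ext' h.symm (x.hb (Or.inl h)).1.symm (x.hb (Or.inl h)).2.symm)
    · exact Or.inr ⟨by simpa using Nat.pos_of_ne_zero h, Or.inr (Or.inl rfl)⟩
  le_top x := by
    by_cases h : x.rk = n
    · exact Or.inl (Glue.ext' h (x.hb (Or.inr h)).1 (x.hb (Or.inr h)).2)
    · exact Or.inr ⟨lt_of_le_of_ne x.hle h, Or.inr (Or.inr rfl)⟩

/-- Eulerian condition (counting form): every non-trivial interval has as many
elements of even rank as of odd rank. -/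
def EulerianCount {α : Type*} [PartialOrder α] (rk : α → ℕ) : Prop :=
  ∀ x y : α, x < y →
    Nat.card {z : α // z ∈ Set.Icc x y ∧ Even (rk z - rk x)} =
    Nat.card {z : α // z ∈ Set.Icc x y ∧ ¬ Even (rk z - rk x)}

section AbIndex

/-- The variable 𝐚 of the non-commutative polynomial ring `ℤ⟨𝐚,𝐛⟩`,
realized as the monoid algebra of the free monoid on two letters. -/
noncomputable def abA : MonoidAlgebra ℤ (FreeMonoid Bool) :=
  MonoidAlgebra.single (FreeMonoid.ofList [true]) 1

/-- The variable 𝐛. -/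
noncomputable def abB : MonoidAlgebra ℤ (FreeMonoid Bool) :=
  MonoidAlgebra.single (FreeMonoid.ofList [false]) 1

/-- The 𝐚𝐛-monomial `u_S` of length `n-1`, with 𝐛 in the positions of `S`. -/
def abMonomial (n : ℕ) (S : Finset ℕ) : FreeMonoid Bool :=
  FreeMonoid.ofList ((List.range (n - 1)).map (fun j => decide ((j + 1) ∉ S)))

/-- The 𝐚𝐛-index `Ψ(P) = ∑_S h_S u_S` of a bounded poset of rank `n`
with rank function `rk`. -/
noncomputable def abIndex {α : Type*} [PartialOrder α] [BoundedOrder α]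
    (rk : α → ℕ) (n : ℕ) : MonoidAlgebra ℤ (FreeMonoid Bool) :=
  ∑ S ∈ (Finset.Icc 1 (n - 1)).powerset,
    MonoidAlgebra.single (abMonomial n S) (flagH rk S)

/-- The weight `wt(c)` of a maximal chain, as an 𝐚𝐛-monomial. -/
def chainWeight {α : Type*} [PartialOrder α] [OrderBot α]
    (τ : α → α → α → Bool) (l : List α) : FreeMonoid Bool :=
  FreeMonoid.ofList ((List.range (l.length - 2)).map
    (fun i => τ (l.getD i ⊥) (l.getD (i + 1) ⊥) (l.getD (i + 2) ⊥)))

end AbIndex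
/-- One of the two butterfly subposets of `P_n` (including `0̂` and `1̂`). -/
def glueSide (n : ℕ) (b : Bool) : Set (Glue n) :=
  {x | x.copy = b ∨ x.rk = 0 ∨ x.rk = n}


section Aux

lemma glue_lt_iff {n : ℕ} {x y : Glue n} :
    x < y ↔ x.rk < y.rk ∧ (x.copy = y.copy ∨ x.rk = 0 ∨ y.rk = n) := by
  rw [lt_iff_le_and_ne]
  constructor
  · rintro ⟨(rfl | h), hne⟩
    · exact absurd rfl hne
    · exact h
  · intro h
    refine ⟨Or.inr h, fun he => ?_⟩
    subst he
    exact absurd h.1 (lt_irrefl _)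

lemma mem_glueSide_iff {n : ℕ} {b : Bool} {z : Glue n} :
    z ∈ glueSide n b ↔ (z.copy = b ∨ z.rk = 0 ∨ z.rk = n) := Iff.rfl

lemma icc_subset_side {n : ℕ} (hn : 4 ≤ n) {b : Bool} {x y : Glue n}
    (hx : x ∈ glueSide n b) (hy : y ∈ glueSide n b) (hxy : x < y) (hrk : y.rk - x.rk ≤ 3) :
    Set.Icc x y ⊆ glueSide n b := by
  rw [mem_glueSide_iff] at hx hy
  have hxr := x.hle
  have hyr := y.hle
  have hlt := (glue_lt_iff.1 hxy).1
  rintro z ⟨hxz, hzy⟩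
  rw [mem_glueSide_iff]
  have hzr := z.hle
  by_cases hz0 : z.rk = 0
  · exact Or.inr (Or.inl hz0)
  by_cases hzn : z.rk = n
  · exact Or.inr (Or.inr hzn)
  left
  rcases hxz with rfl | ⟨h1, h2⟩
  · rcases hx with h | h | h
    · exact h
    · omega
    · omega
  rcases hzy with rfl | ⟨h3, h4⟩
  · rcases hy with h | h | h
    · exact h
    · omega
    · omega
  by_cases hyn : y.rk = n
  · have hxc : x.copy = z.copy := by
      rcases h2 with h | h | h
      · exact h
      · omega
      · omega
    rcases hx with h | h | h
    · rw [← hxc]; exact h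
    · omega
    · omega
  · have hzc : z.copy = y.copy := by
      rcases h4 with h | h | h
      · exact h
      · omega
      · omega
    rcases hy with h | h | h
    · rw [hzc]; exact h
    · omega
    · omega

lemma glue_mid {n : ℕ} {b : Bool} {x y : Glue n} (hx : x ∈ glueSide n b)
    (hy : y ∈ glueSide n b) (h2 : x.rk + 2 ≤ y.rk) :
    ∃ w : Glue n, w ∈ glueSide n b ∧ x < w ∧ w < y := by
  rw [mem_glueSide_iff] at hx hy
  have hyle := y.hle
  refine ⟨⟨x.rk + 1, false, b, by omega, fun h => absurd h (by omega)⟩,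
    Or.inl rfl, ?_, ?_⟩
  · refine glue_lt_iff.2 ⟨(by omega : x.rk < x.rk + 1), ?_⟩
    rcases hx with h | h | h
    · exact Or.inl h
    · exact Or.inr (Or.inl h)
    · exfalso; omega
  · refine glue_lt_iff.2 ⟨(by omega : x.rk + 1 < y.rk), ?_⟩
    rcases hy with h | h | h
    · exact Or.inl h.symm
    · exfalso; omega
    · exact Or.inr (Or.inr h)

lemma side_covby_iff {n : ℕ} {b : Bool} {u v : ↥(glueSide n b)} :
    u ⋖ v ↔ u.1 ⋖ v.1 := by
  constructor
  · intro h
    have huv : u.1 < v.1 := Subtype.coe_lt_coe.2 h.1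
    refine ⟨huv, ?_⟩
    intro c hc1 hc2
    have h1 := (glue_lt_iff.1 hc1).1
    have h2 := (glue_lt_iff.1 hc2).1
    obtain ⟨w, hw, hw1, hw2⟩ := glue_mid u.2 v.2 (by omega)
    exact h.2 (show u < (⟨w, hw⟩ : ↥(glueSide n b)) from Subtype.coe_lt_coe.1 hw1)
      (Subtype.coe_lt_coe.1 hw2)
  · intro h
    refine ⟨Subtype.coe_lt_coe.1 h.1, ?_⟩
    intro c hc1 hc2
    exact h.2 (Subtype.coe_lt_coe.2 hc1) (Subtype.coe_lt_coe.2 hc2)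

lemma satchain_mem {α : Type*} [PartialOrder α] {x y : α} {l : List α}
    (h : SatChain x y l) : ∀ z ∈ l, z ∈ Set.Icc x y := by
  obtain ⟨hc, hh, hl⟩ := h
  have hc' : l.Chain' (· < ·) := hc.imp fun _ _ h => h.lt
  have hp : l.Pairwise (· < ·) := List.isChain_iff_pairwise.mp hc'
  intro z hz
  constructor
  · cases l with
    | nil => simp at hh
    | cons a t =>
      obtain rfl : a = x := by simpa using hh
      rcases List.mem_cons.1 hz with rfl | hz
      · exact le_refl _
      · exact ((List.pairwise_cons.1 hp).1 z hz).le
  · have hp2 : l.reverse.Pairwise (fun a b => b < a) := List.pairwise_reverse.2 hp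
    have hz2 : z ∈ l.reverse := List.mem_reverse.2 hz
    have hh2 : l.reverse.head? = some y := by rw [List.head?_reverse]; exact hl
    cases hr : l.reverse with
    | nil => rw [hr] at hh2; simp at hh2
    | cons a t =>
      rw [hr] at hh2 hz2 hp2
      obtain rfl : a = y := by simpa using hh2
      rcases List.mem_cons.1 hz2 with rfl | hz2
      · exact le_refl _
      · exact ((List.pairwise_cons.1 hp2).1 z hz2).le

lemma map_val_pmap {α : Type*} {p : α → Prop} :
    ∀ (l : List α) (H : ∀ z ∈ l, p z),
      (l.pmap (fun z hz => (⟨z, hz⟩ : Subtype p)) H).map Subtype.val = l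
  | [], _ => rfl
  | a :: t, H => by
      simp only [List.pmap, List.map_cons]
      rw [map_val_pmap t]

lemma satChain_map_iff {n : ℕ} {b : Bool} {x y : ↥(glueSide n b)}
    {m : List ↥(glueSide n b)} :
    SatChain x y m ↔ SatChain x.1 y.1 (m.map Subtype.val) := by
  unfold SatChain
  simp only [List.Chain']
  rw [List.isChain_map, List.head?_map, List.getLast?_map]
  constructor
  · rintro ⟨h1, h2, h3⟩
    refine ⟨h1.imp fun _ _ h => side_covby_iff.1 h, ?_, ?_⟩
    · rw [h2]; rfl
    · rw [h3]; rfl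
  · rintro ⟨h1, h2, h3⟩
    refine ⟨h1.imp fun _ _ h => side_covby_iff.2 h, ?_, ?_⟩
    · obtain ⟨a, ha, hax⟩ := Option.map_eq_some_iff.1 h2
      rw [ha]
      exact congrArg some (Subtype.ext hax)
    · obtain ⟨a, ha, hax⟩ := Option.map_eq_some_iff.1 h3
      rw [ha]
      exact congrArg some (Subtype.ext hax)

lemma risingOn_map {n : ℕ} {b : Bool} (τ : Glue n → Glue n → Glue n → Bool)
    (m : List ↥(glueSide n b)) :
    RisingOn (fun u v w : ↥(glueSide n b) => τ u.1 v.1 w.1) m ↔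
      RisingOn τ (m.map Subtype.val) := by
  unfold RisingOn
  simp only [List.length_map, List.get_eq_getElem, List.getElem_map]

end Aux

/-- For `n ≥ 4`, every interval of `P_n` of length at most 3 other than
`[0̂,1̂]` is an interval of one of the two butterfly subposets; in particular, if `τ` is
a triple assignment of `P_n`, then its restriction to either butterfly subposet
satisfies the hypothesis that every interval of rank at most 3 has a unique rising
chain. -/
theorem glue_small_intervals (n : ℕ) (hn : 4 ≤ n) :
    (∀ x y : Glue n, x < y → y.rk - x.rk ≤ 3 → ¬(x = ⊥ ∧ y = ⊤) →
      ∃ b : Bool, Set.Icc x y ⊆ glueSide n b) ∧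
    ∀ τ : Glue n → Glue n → Glue n → Bool, IsTripleAssignment τ →
      ∀ b : Bool, ∀ x y : ↥(glueSide n b), x < y → y.1.rk - x.1.rk ≤ 3 →
        ∃! l : List ↥(glueSide n b),
          SatChain x y l ∧ RisingOn (fun u v w => τ u.1 v.1 w.1) l := by
  constructor
  · intro x y hlt hrk _
    have h := glue_lt_iff.1 hlt
    have hyr := y.hle
    by_cases h0 : x.rk = 0
    · by_cases hyn : y.rk = n
      · exact absurd hrk (by omega)
      · exact ⟨y.copy, icc_subset_side hn (Or.inr (Or.inl h0)) (Or.inl rfl) hlt hrk⟩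
    · refine ⟨x.copy, icc_subset_side hn (Or.inl rfl) ?_ hlt hrk⟩
      rcases h.2 with hc | hc | hc
      · exact Or.inl hc.symm
      · exact absurd hc h0
      · exact Or.inr (Or.inr hc)
  · intro τ hτ b x y hlt hrk
    have hxy : x.1 < y.1 := Subtype.coe_lt_coe.2 hlt
    have hsub : Set.Icc x.1 y.1 ⊆ glueSide n b := icc_subset_side hn x.2 y.2 hxy hrk
    obtain ⟨l₀, ⟨hsat, hrise⟩, huniq⟩ := hτ x.1 y.1 hxy
    have hmem : ∀ z ∈ l₀, z ∈ glueSide n b := fun z hz => hsub (satchain_mem hsat z hz)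
    set l₀' : List ↥(glueSide n b) :=
      l₀.pmap (fun z hz => (⟨z, hz⟩ : ↥(glueSide n b))) hmem with hdef
    have hmapval : l₀'.map Subtype.val = l₀ := map_val_pmap l₀ hmem
    refine ⟨l₀', ⟨?_, ?_⟩, ?_⟩
    · exact satChain_map_iff.2 (by rw [hmapval]; exact hsat)
    · exact (risingOn_map τ l₀').2 (by rw [hmapval]; exact hrise)
    · rintro l' ⟨hs', hr'⟩
      have h1 : SatChain x.1 y.1 (l'.map Subtype.val) := satChain_map_iff.1 hs'
      have h2 : RisingOn τ (l'.map Subtype.val) := (risingOn_map τ l').1 hr'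
      have heq : l'.map Subtype.val = l₀ := huniq _ ⟨h1, h2⟩
      apply List.map_injective_iff.2 Subtype.val_injective
      rw [heq, hmapval]
end

section
/- The ab-index of the poset P_n equals 2(a+b)^{n-1} − (a−b)^{n-1} in the ring of non-commutative polynomials in a and b. -/
open Finset

lemma alt_sum_id {α : Type*} [DecidableEq α] (S : Finset α) :
    ∑ T ∈ S.powerset, ((-1 : ℤ)) ^ (S.card - T.card) * 2 ^ T.card = 1 := by
  induction S using Finset.induction_on with
  | empty => simp
  | @insert a s ha ih =>
    rw [Finset.sum_powerset_insert ha]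
    have h1 : ∑ T ∈ s.powerset, ((-1:ℤ)) ^ ((insert a s).card - T.card) * 2 ^ T.card
        = - ∑ T ∈ s.powerset, ((-1:ℤ)) ^ (s.card - T.card) * 2 ^ T.card := by
      rw [← Finset.sum_neg_distrib]
      refine Finset.sum_congr rfl fun T hT => ?_
      have hTs : T.card ≤ s.card := Finset.card_le_card (Finset.mem_powerset.mp hT)
      rw [Finset.card_insert_of_notMem ha]
      have : s.card + 1 - T.card = (s.card - T.card) + 1 := by omega
      rw [this, pow_succ]
      ring
    have h2 : ∑ T ∈ s.powerset, ((-1:ℤ)) ^ ((insert a s).card - (insert a T).card) * 2 ^ (insert a T).card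
        = ∑ T ∈ s.powerset, 2 * (((-1:ℤ)) ^ (s.card - T.card) * 2 ^ T.card) := by
      refine Finset.sum_congr rfl fun T hT => ?_
      have hTs : T ⊆ s := Finset.mem_powerset.mp hT
      have haT : a ∉ T := fun h => ha (hTs h)
      rw [Finset.card_insert_of_notMem ha, Finset.card_insert_of_notMem haT]
      have : s.card + 1 - (T.card + 1) = s.card - T.card := by omega
      rw [this, pow_succ]
      ring
    rw [h1, h2, ← Finset.mul_sum, ih]
    ring

lemma expand_pow (c : ℤ) (m : ℕ) :
    (abA + MonoidAlgebra.single (FreeMonoid.ofList [false]) c) ^ m =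
    ∑ S ∈ (Finset.Icc 1 m).powerset,
      MonoidAlgebra.single
        (FreeMonoid.ofList ((List.range m).map (fun j => decide ((j + 1) ∉ S))))
        (c ^ S.card) := by
  induction m with
  | zero =>
    simp [MonoidAlgebra.one_def]
  | succ m ih =>
    rw [pow_succ, ih]
    have hins : Finset.Icc 1 (m + 1) = insert (m + 1) (Finset.Icc 1 m) :=
      (Finset.insert_Icc_right_eq_Icc_add_one (by omega)).symm
    rw [hins, Finset.sum_powerset_insert (by simp)]
    rw [Finset.sum_mul]
    have key : ∀ S ∈ (Finset.Icc 1 m).powerset,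
        MonoidAlgebra.single
          (FreeMonoid.ofList ((List.range m).map (fun j => decide ((j + 1) ∉ S)))) (c ^ S.card) *
          (abA + MonoidAlgebra.single (FreeMonoid.ofList [false]) c)
        = MonoidAlgebra.single
            (FreeMonoid.ofList ((List.range (m+1)).map (fun j => decide ((j + 1) ∉ S)))) (c ^ S.card)
          + MonoidAlgebra.single
            (FreeMonoid.ofList ((List.range (m+1)).map
              (fun j => decide ((j + 1) ∉ insert (m+1) S)))) (c ^ (insert (m+1) S).card) := by
      intro S hS
      have hSm : S ⊆ Finset.Icc 1 m := Finset.mem_powerset.mp hS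
      have hnm : (m + 1) ∉ S := fun h => by have := Finset.mem_Icc.mp (hSm h); omega
      rw [mul_add, abA, MonoidAlgebra.single_mul_single, MonoidAlgebra.single_mul_single]
      congr 1
      · rw [List.range_succ, List.map_append, FreeMonoid.ofList_append]
        congr 1
        · simp [hnm]
        · ring
      · rw [List.range_succ, List.map_append, FreeMonoid.ofList_append]
        have hmap : (List.range m).map (fun j => decide ((j + 1) ∉ insert (m+1) S))
            = (List.range m).map (fun j => decide ((j + 1) ∉ S)) := by
          refine List.map_congr_left fun j hj => ?_
          have hj' : j < m := List.mem_range.mp hj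
          simp only [Finset.mem_insert]
          congr 1
          simp only [eq_iff_iff]
          constructor
          · intro h hmem; exact h (Or.inr hmem)
          · rintro h (h1 | h2); omega; exact h h2
        rw [hmap]
        congr 1
        · simp
        · rw [Finset.card_insert_of_notMem hnm, pow_succ]
    rw [Finset.sum_congr rfl key, Finset.sum_add_distrib]
lemma Glue.rk_bot {n : ℕ} : (⊥ : Glue n).rk = 0 := rfl
lemma Glue.rk_top {n : ℕ} : (⊤ : Glue n).rk = n := rfl

lemma Glue.copy_eq_of_chain {n : ℕ} {c : Finset (Glue n)}
    (hch : IsChain (· ≤ ·) (↑c : Set (Glue n)))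
    (hrk : ∀ x ∈ c, 1 ≤ x.rk ∧ x.rk ≤ n - 1)
    {x y : Glue n} (hx : x ∈ c) (hy : y ∈ c) : x.copy = y.copy := by
  rcases eq_or_ne x y with rfl | hne
  · rfl
  have hxr := hrk x hx
  have hyr := hrk y hy
  have hn : 1 ≤ n - 1 := le_trans hxr.1 hxr.2
  rcases hch hx hy hne with h | h
  · rcases h with rfl | ⟨_, hc | h0 | hn'⟩
    · rfl
    · exact hc
    · omega
    · omega
  · rcases h with rfl | ⟨_, hc | h0 | hn'⟩
    · rfl
    · exact hc.symm
    · omega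
    · omega

lemma flagF_glue {n : ℕ} {S : Finset ℕ} (hS : S ⊆ Finset.Icc 1 (n - 1)) (hne : S.Nonempty) :
    flagF (Glue.rk (n := n)) S = 2 ^ (S.card + 1) := by
  classical
  have hmem : ∀ i ∈ S, 1 ≤ i ∧ i ≤ n - 1 := fun i hi => Finset.mem_Icc.mp (hS hi)
  let mk : {i // i ∈ S} → Bool → Bool → Glue n := fun p s cp =>
    ⟨p.1, s, cp, by have := hmem p.1 p.2; omega,
      by intro hh; exfalso; have := hmem p.1 p.2; omega⟩
  have mk_rk : ∀ p s cp, (mk p s cp).rk = p.1 := fun _ _ _ => rfl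
  have mk_side : ∀ p s cp, (mk p s cp).side = s := fun _ _ _ => rfl
  have mk_copy : ∀ p s cp, (mk p s cp).copy = cp := fun _ _ _ => rfl
  let p0 : {i // i ∈ S} := ⟨hne.choose, hne.choose_spec⟩
  let e : ({i // i ∈ S} → Bool) × Bool →
      {c : Finset (Glue n) // IsChain (· ≤ ·) (↑c : Set (Glue n)) ∧ c.image Glue.rk = S ∧
        c.card = S.card ∧ ∀ x ∈ c, ⊥ < x ∧ x < ⊤} := fun gc =>
    ⟨S.attach.image (fun p => mk p (gc.1 p) gc.2), by
      constructor
      · -- chain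
        rintro x hx y hy hne'
        simp only [Finset.coe_image, Set.mem_image, Finset.mem_coe, Finset.mem_attach,
          true_and] at hx hy
        obtain ⟨p, _, rfl⟩ := hx
        obtain ⟨q, _, rfl⟩ := hy
        have hpq : p.1 ≠ q.1 := by
          intro h
          exact hne' (by cases Subtype.ext h; rfl)
        rcases Nat.lt_or_ge p.1 q.1 with h | h
        · exact Or.inl (Or.inr ⟨h, Or.inl rfl⟩)
        · exact Or.inr (Or.inr ⟨lt_of_le_of_ne h (Ne.symm hpq), Or.inl rfl⟩)
      constructor
      · -- image
        rw [Finset.image_image]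
        have : (Glue.rk ∘ fun p => mk p (gc.1 p) gc.2) = fun p : {i // i ∈ S} => p.1 := rfl
        rw [this, Finset.attach_image_val]
      constructor
      · -- card
        rw [Finset.card_image_of_injective _ ?_, Finset.card_attach]
        intro p q h
        have := congrArg Glue.rk h
        exact Subtype.ext this
      · -- bounds
        intro x hx
        simp only [Finset.mem_image, Finset.mem_attach, true_and] at hx
        obtain ⟨p, rfl⟩ := hx
        have hp := hmem p.1 p.2
        constructor
        · refine lt_of_le_of_ne bot_le fun h => ?_
          have h2 := congrArg Glue.rk h
          rw [Glue.rk_bot, mk_rk] at h2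
          omega
        · refine lt_of_le_of_ne le_top fun h => ?_
          have h2 := congrArg Glue.rk h
          rw [Glue.rk_top, mk_rk] at h2
          omega⟩
  have hbij : Function.Bijective e := by
    constructor
    · rintro ⟨g, cp⟩ ⟨g', cp'⟩ h
      have h' : S.attach.image (fun p => mk p (g p) cp)
          = S.attach.image (fun p => mk p (g' p) cp') := congrArg Subtype.val h
      have key : ∀ p : {i // i ∈ S}, g p = g' p ∧ cp = cp' := by
        intro p
        have hm : mk p (g p) cp ∈ S.attach.image (fun q => mk q (g' q) cp') := by
          rw [← h']
          exact Finset.mem_image_of_mem _ (Finset.mem_attach _ _)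
        obtain ⟨q, _, hq⟩ := Finset.mem_image.mp hm
        have hrkq := congrArg Glue.rk hq
        rw [mk_rk, mk_rk] at hrkq
        have hqp : q = p := Subtype.ext hrkq
        subst hqp
        exact ⟨(congrArg Glue.side hq).symm, (congrArg Glue.copy hq).symm⟩
      have hg : g = g' := funext fun p => (key p).1
      have hcp : cp = cp' := (key p0).2
      simp [hg, hcp]
    · rintro ⟨c, hch, himg, hcard, hbd⟩
      have hrkS : ∀ x ∈ c, x.rk ∈ S := fun x hx => himg ▸ Finset.mem_image_of_mem _ hx
      have hrk' : ∀ x ∈ c, 1 ≤ x.rk ∧ x.rk ≤ n - 1 := fun x hx => hmem _ (hrkS x hx)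
      have hex : ∀ p : {i // i ∈ S}, ∃ x, x ∈ c ∧ Glue.rk x = p.1 := by
        intro p
        have hp : (p : ℕ) ∈ Finset.image Glue.rk c := by rw [himg]; exact p.2
        obtain ⟨x, hx, hr⟩ := Finset.mem_image.mp hp
        exact ⟨x, hx, hr⟩
      choose F hFc hFrk using hex
      refine ⟨⟨fun p => (F p).side, (F p0).copy⟩, ?_⟩
      apply Subtype.ext
      show S.attach.image (fun p => mk p (F p).side (F p0).copy) = c
      have hFeq : ∀ p : {i // i ∈ S}, mk p (F p).side (F p0).copy = F p := by
        intro p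
        exact Glue.ext' (by rw [mk_rk, hFrk]) rfl
          (Glue.copy_eq_of_chain (x := F p0) (y := F p) hch hrk' (hFc p0) (hFc p))
      rw [Finset.image_congr (fun p _ => hFeq p)]
      have hsub : S.attach.image F ⊆ c := by
        intro x hx
        obtain ⟨p, _, rfl⟩ := Finset.mem_image.mp hx
        exact hFc p
      refine Finset.eq_of_subset_of_card_le hsub ?_
      have hFinj : Function.Injective F := by
        intro p q hpq
        apply Subtype.ext
        rw [← hFrk p, ← hFrk q, hpq]
      rw [Finset.card_image_of_injective _ hFinj, Finset.card_attach, hcard]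
  rw [flagF, Nat.card_eq_of_bijective e hbij |>.symm, Nat.card_eq_fintype_card]
  rw [Fintype.card_prod, Fintype.card_fun, Fintype.card_coe, Fintype.card_bool]
  rw [pow_succ]

lemma flagF_empty' {α : Type*} [PartialOrder α] [BoundedOrder α] (rk : α → ℕ) :
    flagF rk ∅ = 1 := by
  classical
  rw [flagF, Nat.card_eq_one_iff_unique]
  constructor
  · constructor
    rintro ⟨c, h⟩ ⟨c', h'⟩
    have hc : c = ∅ := Finset.card_eq_zero.mp (by simpa using h.2.2.1)
    have hc' : c' = ∅ := Finset.card_eq_zero.mp (by simpa using h'.2.2.1)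
    subst hc hc'
    rfl
  · exact ⟨⟨∅, by simp [IsChain], by simp, by simp, by simp⟩⟩

lemma ma_single_neg (a : FreeMonoid Bool) (b : ℤ) :
    MonoidAlgebra.single a (-b) = - MonoidAlgebra.single a b := MonoidAlgebra.single_neg a b

lemma ma_single_sub (a : FreeMonoid Bool) (b c : ℤ) :
    MonoidAlgebra.single a (b - c) = MonoidAlgebra.single a b - MonoidAlgebra.single a c :=
  MonoidAlgebra.single_sub a b c

lemma flagH_glue {n : ℕ} {S : Finset ℕ} (hS : S ⊆ Finset.Icc 1 (n - 1)) :
    flagH (Glue.rk (n := n)) S = 2 - (-1) ^ S.card := by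
  classical
  have hF : ∀ T ∈ S.powerset,
      ((-1 : ℤ)) ^ (S.card - T.card) * (flagF (Glue.rk (n := n)) T : ℤ)
      = 2 * ((-1 : ℤ) ^ (S.card - T.card) * 2 ^ T.card)
        - (if T = ∅ then (-1 : ℤ) ^ S.card else 0) := by
    intro T hT
    by_cases hTe : T = ∅
    · subst hTe
      rw [flagF_empty']
      rw [if_pos rfl]
      simp only [Finset.card_empty, pow_zero, Nat.sub_zero, Nat.cast_one, mul_one]
      ring
    · rw [flagF_glue (Finset.Subset.trans (Finset.mem_powerset.mp hT) hS)
        (Finset.nonempty_iff_ne_empty.mpr hTe)]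
      rw [if_neg hTe]
      push_cast
      rw [pow_succ]
      ring
  rw [flagH, Finset.sum_congr rfl hF, Finset.sum_sub_distrib, ← Finset.mul_sum, alt_sum_id,
    Finset.sum_ite_eq' _ ∅ (fun _ => (-1 : ℤ) ^ S.card),
    if_pos (Finset.empty_mem_powerset S)]
  ring

/-- The 𝐚𝐛-index of the poset `P_n` equals `2(𝐚+𝐛)^{n-1} − (𝐚−𝐛)^{n-1}`
in the non-commutative polynomial ring in `𝐚` and `𝐛`. -/
theorem glue_abIndex (n : ℕ) :
    abIndex (Glue.rk (n := n)) n = 2 * (abA + abB) ^ (n - 1) - (abA - abB) ^ (n - 1) := by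
  classical
  have e1 : (abA + abB) ^ (n - 1) =
      ∑ S ∈ (Finset.Icc 1 (n - 1)).powerset,
        MonoidAlgebra.single (abMonomial n S) ((1 : ℤ) ^ S.card) := expand_pow 1 (n - 1)
  have e2 : (abA - abB) ^ (n - 1) =
      ∑ S ∈ (Finset.Icc 1 (n - 1)).powerset,
        MonoidAlgebra.single (abMonomial n S) ((-1 : ℤ) ^ S.card) := by
    have : abA - abB = abA + MonoidAlgebra.single (FreeMonoid.ofList [false]) (-1 : ℤ) := by
      rw [ma_single_neg, sub_eq_add_neg, abB]
    rw [this]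
    exact expand_pow (-1) (n - 1)
  rw [abIndex, e1, e2, Finset.mul_sum, ← Finset.sum_sub_distrib]
  refine Finset.sum_congr rfl fun S hS => ?_
  rw [flagH_glue (Finset.mem_powerset.mp hS), ma_single_sub, one_pow, two_mul,
    ← MonoidAlgebra.single_add, one_add_one_eq_two]
end

section
/- If a graded poset P admits a triple assignment τ, then its ab-index equals the sum over all maximal chains c of P of the weight wt(c) = τ(x_0,x_1,x_2)·τ(x_1,x_2,x_3)⋯τ(x_{n-2},x_{n-1},x_n), a monomial in the non-commuting variables a and b. -/
open Finset

section Basics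
variable {α : Type*} [PartialOrder α] {x y z : α} {l m : List α}

lemma SatChain.ne_nil (h : SatChain x y l) : l ≠ [] := by
  rintro rfl; simp [SatChain] at h

lemma SatChain.length_pos (h : SatChain x y l) : 0 < l.length :=
  List.length_pos_iff.mpr h.ne_nil

lemma SatChain.getElem_zero (h : SatChain x y l) (h0 : 0 < l.length) : l[0] = x := by
  have := h.2.1
  rw [List.head?_eq_head h.ne_nil] at this
  simp only [List.head_eq_getElem, Option.some.injEq] at this
  exact this

lemma SatChain.getElem_last (h : SatChain x y l) (hl : l.length - 1 < l.length) :
    l[l.length - 1] = y := by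
  have := h.2.2
  rw [List.getLast?_eq_getLast h.ne_nil] at this
  simp only [List.getLast_eq_getElem, Option.some.injEq] at this
  exact this

lemma SatChain.covby (h : SatChain x y l) (i : ℕ) (hi : i + 1 < l.length) :
    l[i] ⋖ l[i + 1] := by
  have := List.isChain_iff_getElem.mp h.1 i (by omega)
  simpa using this

lemma SatChain.lt_getElem (h : SatChain x y l) {i j : ℕ} (hij : i < j) (hj : j < l.length) :
    l[i]'(by omega) < l[j] := by
  have : IsTrans α (· < ·) := ⟨fun _ _ _ => lt_trans⟩
  have hp : l.Pairwise (· < ·) :=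
    List.isChain_iff_pairwise.mp (List.IsChain.imp (fun a b hab => hab.lt) h.1)
  exact List.pairwise_iff_get.mp hp ⟨i, by omega⟩ ⟨j, hj⟩ hij

lemma SatChain.nodup (h : SatChain x y l) : l.Nodup := by
  rw [List.nodup_iff_injective_get]
  rintro ⟨i, hi⟩ ⟨j, hj⟩ hij
  simp only [List.get_eq_getElem] at hij
  rcases lt_trichotomy i j with h' | h' | h'
  · exact absurd hij (h.lt_getElem h' hj).ne
  · simpa using h'
  · exact absurd hij.symm (h.lt_getElem h' hi).ne

lemma SatChain.le (h : SatChain x y l) : x ≤ y := by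
  have h0 : 0 < l.length := h.length_pos
  rcases Nat.eq_or_lt_of_le (Nat.one_le_iff_ne_zero.mpr (by omega) : 1 ≤ l.length) with h1 | h1
  · have : l[0] = l[l.length - 1]'(by omega) := by congr 1; omega
    rw [h.getElem_zero h0] at this
    rw [h.getElem_last (by omega)] at this; exact this.le
  · have := h.lt_getElem (i := 0) (j := l.length - 1) (by omega) (by omega)
    rw [h.getElem_zero h0, h.getElem_last (by omega)] at this
    exact this.le

lemma SatChain.eq_singleton (h : SatChain x x l) : l = [x] := by
  have h0 := h.length_pos
  have h1 : l.length = 1 := by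
    by_contra h1
    have := h.lt_getElem (i := 0) (j := l.length - 1) (by omega) (by omega)
    rw [h.getElem_zero h0, h.getElem_last (by omega)] at this
    exact lt_irrefl _ this
  have := h.getElem_zero h0
  rcases l with _ | ⟨a, _ | _⟩ <;> simp_all

lemma satChain_singleton (x : α) : SatChain x x [x] := by
  refine ⟨List.isChain_singleton _, by simp, by simp⟩

/-- joining two saturated chains -/
lemma SatChain.append (h1 : SatChain x y l) (h2 : SatChain y z m) :
    SatChain x z (l ++ m.tail) := by
  obtain ⟨a, t, rfl⟩ : ∃ a t, m = a :: t := List.exists_cons_of_ne_nil h2.ne_nil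
  have ha : a = y := by simpa using h2.2.1
  subst ha
  refine ⟨?_, ?_, ?_⟩
  · refine h1.1.append (h2.1.tail) ?_
    intro p hp q hq
    rw [List.getLast?_eq_getLast h1.ne_nil] at hp
    have hpy : p = a := by
      have := h1.getElem_last (by have := h1.length_pos; omega)
      simp only [Option.mem_def, Option.some.injEq] at hp
      rw [← hp]; rw [List.getLast_eq_getElem]; exact this
    subst hpy
    rcases t with _ | ⟨b, t'⟩
    · simp at hq
    · simp only [List.tail_cons, List.head?_cons, Option.mem_def, Option.some.injEq] at hq
      subst hq
      exact (List.isChain_cons_cons.mp h2.1).1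
  · rcases l with _ | ⟨a, t'⟩
    · exact absurd rfl h1.ne_nil
    · simpa using h1.2.1
  · rcases t with _ | ⟨b, t'⟩
    · have : z = a := by simpa [SatChain] using h2.2.2.symm
      subst this
      simpa using h1.2.2
    · simp only [List.tail_cons]
      rw [List.getLast?_append_of_ne_nil _ (by simp)]
      simpa using h2.2.2

lemma SatChain.mem_getElem (h : SatChain x y l) {w : α} (hw : w ∈ l) :
    ∃ i : ℕ, ∃ hi : i < l.length, l[i] = w := by
  obtain ⟨i, hi⟩ := List.get_of_mem hw
  exact ⟨i.1, i.2, hi⟩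

end Basics
section Graded
variable {α : Type*} [PartialOrder α] {rk : α → ℕ} {x y z : α} {l m : List α}
variable {τ : α → α → α → Bool}

lemma SatChain.rank (h : SatChain x y l) (hg : ∀ x y : α, x ⋖ y → rk y = rk x + 1)
    (i : ℕ) (hi : i < l.length) : rk (l[i]) = rk x + i := by
  induction i with
  | zero => rw [h.getElem_zero (by omega)]; omega
  | succ k ih =>
    have hk := ih (by omega)
    rw [hg _ _ (h.covby k (by omega)), hk]; omega

lemma SatChain.rk_length (h : SatChain x y l) (hg : ∀ x y : α, x ⋖ y → rk y = rk x + 1) :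
    rk y + 1 = rk x + l.length := by
  have h0 := h.length_pos
  have := h.rank hg (l.length - 1) (by omega)
  rw [h.getElem_last (by omega)] at this
  omega

lemma SatChain.two_le_length (h : SatChain x y l) (hxy : x ≠ y) : 2 ≤ l.length := by
  have h0 := h.length_pos
  by_contra hc
  have h1 : l.length = 1 := by omega
  have hz := h.getElem_zero h0
  have h2 := h.getElem_last (by omega)
  exact hxy (by rw [← hz, ← h2]; congr 1; omega)

lemma rk_lt_of_lt (hτ : IsTripleAssignment τ) (hg : ∀ x y : α, x ⋖ y → rk y = rk x + 1)
    (hxy : x < y) : rk x < rk y := by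
  obtain ⟨l, ⟨hl, _⟩, _⟩ := hτ x y hxy
  have h2 := hl.two_le_length hxy.ne
  have := hl.rk_length hg
  omega

/-- The unique rising chain from `x` to `y`. -/
noncomputable def risingChain (τ : α → α → α → Bool) (hτ : IsTripleAssignment τ)
    (x y : α) : List α :=
  letI := Classical.dec (x < y)
  if h : x < y then (hτ x y h).exists.choose else [x]

lemma risingChain_spec (hτ : IsTripleAssignment τ) (h : x ≤ y) :
    SatChain x y (risingChain τ hτ x y) ∧ RisingOn τ (risingChain τ hτ x y) := by
  rcases eq_or_lt_of_le h with rfl | h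
  · rw [risingChain]; rw [dif_neg (lt_irrefl x)]
    exact ⟨satChain_singleton x, fun i hi => by simp at hi⟩
  · rw [risingChain]; rw [dif_pos h]
    exact (hτ x y h).exists.choose_spec

lemma risingChain_unique (hτ : IsTripleAssignment τ) (hl : SatChain x y l)
    (hr : RisingOn τ l) : l = risingChain τ hτ x y := by
  rcases eq_or_lt_of_le hl.le with rfl | h
  · rw [hl.eq_singleton, risingChain]; rw [dif_neg (lt_irrefl _)]
  · rw [risingChain]; rw [dif_pos h]
    exact (hτ x y h).unique ⟨hl, hr⟩ (hτ x y h).exists.choose_spec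

lemma join_length (h1 : SatChain x y l) (h2 : SatChain y z m) :
    (l ++ m.tail).length = l.length + m.length - 1 := by
  have := h2.length_pos
  simp [List.length_tail]
  omega

lemma join_getElem_left {j : ℕ} (hj : j < l.length) (h : j < (l ++ m.tail).length) :
    (l ++ m.tail)[j] = l[j] :=
  List.getElem_append_left hj

lemma join_getElem_right (h1 : SatChain x y l) (h2 : SatChain y z m) {k : ℕ}
    (hk : k < m.length) (hlen : l.length - 1 + k < (l ++ m.tail).length) :
    (l ++ m.tail)[l.length - 1 + k] = m[k] := by
  have h0 := h1.length_pos
  rcases Nat.eq_zero_or_pos k with rfl | hpos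
  · rw [List.getElem_append, dif_pos (by omega)]
    simp only [Nat.add_zero]
    rw [h1.getElem_last (by omega), h2.getElem_zero (by omega)]
  · rw [List.getElem_append, dif_neg (by omega)]
    have hidx : l.length - 1 + k - l.length = k - 1 := by omega
    simp only [hidx]
    rw [List.getElem_tail]
    simp only [show k - 1 + 1 = k from by omega]

end Graded
section Ext
variable {α : Type*} [PartialOrder α] [BoundedOrder α] {τ : α → α → α → Bool}
variable {x y z : α} {l m : List α}

/-- Extension of a chain to a maximal chain by rising chains. -/
noncomputable def extChain (τ : α → α → α → Bool) (hτ : IsTripleAssignment τ) :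
    α → List α → List α
  | x, [] => risingChain τ hτ x ⊤
  | x, y :: ys => risingChain τ hτ x y ++ (extChain τ hτ y ys).tail

lemma extChain_spec (hτ : IsTripleAssignment τ) :
    ∀ (s : List α) (x : α), (x :: s).Chain' (· < ·) → (∀ z ∈ s, z < ⊤) →
    SatChain x ⊤ (extChain τ hτ x s) ∧
    (∀ z ∈ s, z ∈ extChain τ hτ x s) ∧
    (∀ i (hi : i + 2 < (extChain τ hτ x s).length),
      τ ((extChain τ hτ x s)[i]) ((extChain τ hτ x s)[i+1]) ((extChain τ hτ x s)[i+2]) = false →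
      (extChain τ hτ x s)[i+1] ∈ s) := by
  intro s
  induction s with
  | nil =>
    intro x _ _
    obtain ⟨hsat, hris⟩ := risingChain_spec hτ (le_top (a := x))
    refine ⟨hsat, by simp, ?_⟩
    intro i hi hfalse
    exfalso
    have hi' : i + 2 < (risingChain τ hτ x ⊤).length := hi
    have := hris i hi'
    simp only [List.get_eq_getElem] at this
    have hfalse' : τ ((risingChain τ hτ x ⊤)[i]'(by omega))
        ((risingChain τ hτ x ⊤)[i+1]'(by omega))
        ((risingChain τ hτ x ⊤)[i+2]'(by omega)) = false := hfalse
    rw [this] at hfalse'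
    simp at hfalse'
  | cons y ys ih =>
    intro x hchain htop
    have hxy : x < y := (List.isChain_cons_cons.mp hchain).1
    have hchain' : (y :: ys).Chain' (· < ·) := (List.isChain_cons_cons.mp hchain).2
    have hytop : y < ⊤ := htop y (by simp)
    obtain ⟨hE, hEmem, hEtriple⟩ := ih y hchain' (fun z hz => htop z (by simp [hz]))
    set E := extChain τ hτ y ys with hEdef
    obtain ⟨h1, h1r⟩ := risingChain_spec hτ hxy.le
    set l₁ := risingChain τ hτ x y with hl₁
    have hext : extChain τ hτ x (y :: ys) = l₁ ++ E.tail := rfl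
    have hL₁ : 2 ≤ l₁.length := h1.two_le_length hxy.ne
    have hlen : (l₁ ++ E.tail).length = l₁.length + E.length - 1 := join_length h1 hE
    have hEpos := hE.length_pos
    have hsat : SatChain x ⊤ (l₁ ++ E.tail) := h1.append hE
    simp only [hext]
    refine ⟨hsat, ?_, ?_⟩
    · intro z hz
      rcases List.mem_cons.mp hz with rfl | hz
      · apply List.mem_append_left
        have : l₁[l₁.length - 1]'(by omega) = z := h1.getElem_last (by omega)
        rw [← this]; exact List.getElem_mem _
      · apply List.mem_append_right
        have hzE : z ∈ E := hEmem z hz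
        have hyz : y < z := by
          have : IsTrans α (· < ·) := ⟨fun _ _ _ => lt_trans⟩
          have hp := List.isChain_iff_pairwise.mp hchain'
          exact (List.pairwise_cons.mp hp).1 z hz
        have hEcons : E.head hE.ne_nil :: E.tail = E := List.cons_head_tail _
        have hhead : E.head hE.ne_nil = y := by
          rw [List.head_eq_getElem]; exact hE.getElem_zero hEpos
        rw [← hEcons] at hzE
        rcases List.mem_cons.mp hzE with rfl | hz'
        · exact absurd hhead hyz.ne'
        · exact hz'
    · intro i hi hfalse
      rw [hlen] at hi
      rcases lt_or_ge (i + 2) l₁.length with hc | hc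
      · exfalso
        rw [join_getElem_left (by omega) (by omega), join_getElem_left (by omega) (by omega),
          join_getElem_left (by omega) (by omega)] at hfalse
        have := h1r i hc
        simp only [List.get_eq_getElem] at this
        rw [this] at hfalse
        simp at hfalse
      rcases Nat.eq_or_lt_of_le hc with hc2 | hc2
      · -- i + 2 = l₁.length, middle is y
        rw [join_getElem_left (by omega) (by omega)]
        have : i + 1 = l₁.length - 1 := by omega
        simp only [this]
        rw [h1.getElem_last (by omega)]
        simp
      · -- i ≥ l₁.length - 1 : inside E
        obtain ⟨k, rfl⟩ : ∃ k, i = l₁.length - 1 + k := ⟨i - (l₁.length - 1), by omega⟩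
        have e1 : l₁.length - 1 + k + 1 = l₁.length - 1 + (k + 1) := by omega
        have e2 : l₁.length - 1 + k + 2 = l₁.length - 1 + (k + 2) := by omega
        have hk2 : k + 2 < E.length := by omega
        simp only [e1]
        rw [join_getElem_right h1 hE (by omega) (by omega)]
        simp only [e1, e2] at hfalse
        rw [join_getElem_right h1 hE (by omega) (by omega),
          join_getElem_right h1 hE (by omega) (by omega),
          join_getElem_right h1 hE (by omega) (by omega)] at hfalse
        have := hEtriple k hk2 hfalse
        exact List.mem_cons_of_mem _ this

lemma decompose (hτ : IsTripleAssignment τ) :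
    ∀ (s : List α) (x : α) (l : List α), SatChain x ⊤ l → s.Chain' (· < ·) →
    (∀ z ∈ s, z ∈ l.tail) →
    (∀ i (hi : i + 2 < l.length), l[i+1] ∈ s ∨ τ l[i] l[i+1] l[i+2] = true) →
    l = extChain τ hτ x s := by
  intro s
  induction s with
  | nil =>
    intro x l hl _ _ htriple
    have hr : RisingOn τ l := by
      intro i hi
      simp only [List.get_eq_getElem]
      rcases htriple i hi with h | h
      · simp at h
      · exact h
    exact risingChain_unique hτ hl hr
  | cons y ys ih =>
    intro x l hl hchain hmem htriple
    have hnodup := hl.nodup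
    have hlpos := hl.length_pos
    -- find position of y
    have hymem : y ∈ l.tail := hmem y (by simp)
    obtain ⟨j, hj, hjy⟩ : ∃ j : ℕ, ∃ hj : j < l.tail.length, l.tail[j] = y := by
      obtain ⟨⟨j, hj⟩, h⟩ := List.get_of_mem hymem
      exact ⟨j, hj, h⟩
    rw [List.getElem_tail] at hjy
    set i₀ := j + 1 with hi₀
    have hi₀pos : 1 ≤ i₀ := by omega
    have hi₀lt : i₀ < l.length := by have := hj; simp [List.length_tail] at this; omega
    -- split l
    set l₁ := l.take (i₀ + 1) with hl₁
    set l₂ := l.drop i₀ with hl₂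
    have hL₁ : l₁.length = i₀ + 1 := by simp [hl₁]; omega
    have hL₂ : l₂.length = l.length - i₀ := by simp [hl₂]
    have hsplit : l = l₁ ++ l₂.tail := by
      rw [hl₁, hl₂, List.tail_drop, List.take_append_drop]
    have hsat1 : SatChain x y l₁ := by
      refine ⟨hl.1.prefix (List.take_prefix _ _), ?_, ?_⟩
      · have hne : l₁ ≠ [] := by
          intro h; rw [h] at hL₁; simp at hL₁
        rw [List.head?_eq_head hne, List.head_eq_getElem]
        have : l₁[0]'(by omega) = l[0] := by simp only [hl₁]; exact List.getElem_take
        rw [this, hl.getElem_zero hlpos]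
      · have hne : l₁ ≠ [] := by
          intro h; rw [h] at hL₁; simp at hL₁
        rw [List.getLast?_eq_getLast hne, List.getLast_eq_getElem]
        have h1 : l₁[l₁.length - 1]'(by omega) = l[l₁.length - 1]'(by omega) := by
          simp only [hl₁]; exact List.getElem_take
        rw [h1]
        simp only [hL₁, Nat.add_sub_cancel]
        rw [hjy]
    have hsat2 : SatChain y ⊤ l₂ := by
      have hne : l₂ ≠ [] := by
        intro h
        rw [h] at hL₂; simp at hL₂; omega
      refine ⟨hl.1.suffix (List.drop_suffix _ _), ?_, ?_⟩
      · rw [List.head?_eq_head hne, List.head_eq_getElem]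
        have : l₂[0]'(by rw [hL₂]; omega) = l[i₀ + 0] := List.getElem_drop
        simp only [Nat.add_zero] at this
        rw [this, hjy]
      · rw [List.getLast?_eq_getLast hne, List.getLast_eq_getElem]
        have : l₂[l₂.length - 1]'(by omega) = l[i₀ + (l₂.length - 1)] := List.getElem_drop
        rw [this]
        have he : i₀ + (l₂.length - 1) = l.length - 1 := by omega
        simp only [he]
        rw [hl.getElem_last (by omega)]
    have hyys : ∀ z ∈ ys, y < z := by
      have : IsTrans α (· < ·) := ⟨fun _ _ _ => lt_trans⟩
      have hp := List.isChain_iff_pairwise.mp hchain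
      exact (List.pairwise_cons.mp hp).1
    -- l₁ is rising
    have hrise1 : RisingOn τ l₁ := by
      intro k hk
      simp only [List.get_eq_getElem]
      rw [hL₁] at hk
      have e0 : l₁[k]'(by omega) = l[k]'(by omega) := by
        simp only [hl₁]; exact List.getElem_take
      have e1 : l₁[k+1]'(by omega) = l[k+1]'(by omega) := by
        simp only [hl₁]; exact List.getElem_take
      have e2 : l₁[k+2]'(by omega) = l[k+2]'(by omega) := by
        simp only [hl₁]; exact List.getElem_take
      rw [e0, e1, e2]
      rcases htriple k (by omega) with h | h
      · exfalso
        have hlt : l[k+1]'(by omega) < l[i₀] := hl.lt_getElem (by omega) hi₀lt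
        rw [hjy] at hlt
        rcases List.mem_cons.mp h with h' | h'
        · exact absurd h' hlt.ne
        · exact absurd (hlt.trans (hyys _ h')) (lt_irrefl _)
      · exact h
    have hl₁eq : l₁ = risingChain τ hτ x y := risingChain_unique hτ hsat1 hrise1
    -- l₂ decomposes by IH
    have hl₂eq : l₂ = extChain τ hτ y ys := by
      apply ih y l₂ hsat2 hchain.tail
      · intro z hz
        obtain ⟨k, hk, hkz⟩ : ∃ k : ℕ, ∃ hk : k < l.length, l[k] = z := by
          have : z ∈ l := List.mem_of_mem_tail (hmem z (by simp [hz]))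
          obtain ⟨⟨k, hk⟩, h⟩ := List.get_of_mem this
          exact ⟨k, hk, h⟩
        have hyz : y < z := hyys z hz
        have hik : i₀ < k := by
          by_contra hik
          rcases Nat.eq_or_lt_of_le (Nat.le_of_not_lt hik) with h' | h'
          · have heq : z = y := by rw [← hkz, ← hjy]; congr 1
            exact absurd hyz (by rw [heq]; exact lt_irrefl y)
          · have := hl.lt_getElem h' hi₀lt
            rw [hjy, hkz] at this
            exact absurd (hyz.trans this) (lt_irrefl _)
        rw [hl₂, List.tail_drop]
        have : (l.drop (i₀ + 1))[k - (i₀ + 1)]'(by simp; omega) = l[i₀ + 1 + (k - (i₀+1))] :=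
          List.getElem_drop
        have he : i₀ + 1 + (k - (i₀ + 1)) = k := by omega
        simp only [he] at this
        rw [← hkz, ← this]
        exact List.getElem_mem _
      · intro k hk
        have hk' : k < l₂.length := by omega
        have e0 : l₂[k]'(by omega) = l[i₀ + k]'(by omega) := List.getElem_drop
        have e1 : l₂[k+1]'(by omega) = l[i₀ + (k+1)]'(by omega) := List.getElem_drop
        have e2 : l₂[k+2]'(by omega) = l[i₀ + (k+2)]'(by omega) := List.getElem_drop
        rw [e0, e1, e2]
        have e1' : i₀ + (k + 1) = (i₀ + k) + 1 := by omega
        have e2' : i₀ + (k + 2) = (i₀ + k) + 2 := by omega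
        simp only [e1', e2']
        rcases htriple (i₀ + k) (by omega) with h | h
        · rcases List.mem_cons.mp h with h' | h'
          · exfalso
            rw [← hjy] at h'
            have : i₀ + k + 1 = i₀ := by
              by_contra hne
              rcases Nat.lt_or_ge (i₀ + k + 1) i₀ with hlt | hge
              · exact absurd h' (hl.lt_getElem hlt hi₀lt).ne
              · have : i₀ < i₀ + k + 1 := by omega
                exact absurd h'.symm (hl.lt_getElem this (by omega)).ne
            omega
          · exact Or.inl h'
        · exact Or.inr h
    rw [hsplit, hl₁eq, hl₂eq]
    rfl

end Ext
section MaxChains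
variable {α : Type*} [PartialOrder α] [BoundedOrder α] {rk : α → ℕ} {n : ℕ}
variable {τ : α → α → α → Bool} {l : List α} {S : Finset ℕ}

lemma mc_length (hg : IsGraded rk) (htop : rk ⊤ = n) (h : SatChain (⊥ : α) ⊤ l) :
    l.length = n + 1 := by
  have := h.rk_length hg.2
  rw [htop, hg.1] at this
  omega

lemma mc_rank (hg : IsGraded rk) (h : SatChain (⊥ : α) ⊤ l) {i : ℕ} (hi : i < l.length) :
    rk l[i] = i := by
  have := h.rank hg.2 i hi
  rw [hg.1] at this
  omega

lemma mc_rank_injOn (hg : IsGraded rk) (h : SatChain (⊥ : α) ⊤ l) {z w : α}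
    (hz : z ∈ l) (hw : w ∈ l) (hzw : rk z = rk w) : z = w := by
  obtain ⟨i, hi, rfl⟩ := h.mem_getElem hz
  obtain ⟨j, hj, rfl⟩ := h.mem_getElem hw
  rw [mc_rank hg h hi, mc_rank hg h hj] at hzw
  subst hzw; rfl

lemma mc_mem_descSet_iff (h : SatChain (⊥ : α) ⊤ l) {i : ℕ} :
    i ∈ descSet τ l ↔ 1 ≤ i ∧ i + 1 < l.length ∧
      ∃ (h1 : i - 1 < l.length) (h2 : i < l.length) (h3 : i + 1 < l.length),
        τ (l[i-1]) (l[i]) (l[i+1]) = false := by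
  have h0 := h.length_pos
  rw [descSet, Finset.mem_filter, Finset.mem_Icc]
  constructor
  · rintro ⟨⟨hi1, hi2⟩, hτ'⟩
    have hlt : i + 1 < l.length := by omega
    refine ⟨hi1, hlt, by omega, by omega, hlt, ?_⟩
    rw [List.getD_eq_getElem _ _ (by omega), List.getD_eq_getElem _ _ (by omega),
      List.getD_eq_getElem _ _ (by omega)] at hτ'
    exact hτ'
  · rintro ⟨hi1, hi2, _, _, _, hτ'⟩
    refine ⟨⟨hi1, by omega⟩, ?_⟩
    rw [List.getD_eq_getElem _ _ (by omega), List.getD_eq_getElem _ _ (by omega),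
      List.getD_eq_getElem _ _ (by omega)]
    exact hτ'

lemma mc_descSet_subset (hg : IsGraded rk) (htop : rk ⊤ = n) (h : SatChain (⊥ : α) ⊤ l) :
    descSet τ l ⊆ Finset.Icc 1 (n - 1) := by
  intro i hi
  obtain ⟨h1, h2, -⟩ := (mc_mem_descSet_iff h).mp hi
  have hlen := mc_length hg htop h
  rw [Finset.mem_Icc]
  omega

lemma mc_weight_eq (hg : IsGraded rk) (htop : rk ⊤ = n) (h : SatChain (⊥ : α) ⊤ l) :
    chainWeight τ l = abMonomial n (descSet τ l) := by
  have hlen := mc_length hg htop h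
  rw [chainWeight, abMonomial]
  congr 1
  have hr : l.length - 2 = n - 1 := by omega
  rw [hr]
  apply List.map_congr_left
  intro j hj
  rw [List.mem_range] at hj
  have hj2 : j + 2 < l.length := by omega
  rw [List.getD_eq_getElem _ _ (by omega), List.getD_eq_getElem _ _ (by omega),
    List.getD_eq_getElem _ _ (by omega)]
  rcases hb : τ (l[j]) (l[j+1]) (l[j+2]) with _ | _
  · -- false : j+1 is a descent
    have : j + 1 ∈ descSet τ l := by
      rw [mc_mem_descSet_iff h]
      refine ⟨by omega, by omega, by omega, by omega, by omega, ?_⟩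
      simp only [show j + 1 - 1 = j from by omega, show j + 1 + 1 = j + 2 from by omega]
      exact hb
    simp [this, hb]
  · -- true : j+1 is not a descent
    have : j + 1 ∉ descSet τ l := by
      rw [mc_mem_descSet_iff h]
      intro hcon
      obtain ⟨-, -, p1, p2, p3, hf⟩ := hcon
      simp only [show j + 1 - 1 = j from by omega, show j + 1 + 1 = j + 2 from by omega] at hf
      rw [hb] at hf; simp at hf
    simp [this, hb]

end MaxChains

section Counting
variable {α : Type*} [PartialOrder α] [BoundedOrder α] [Finite α] [DecidableEq α]
variable {rk : α → ℕ} {n : ℕ}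
variable {τ : α → α → α → Bool} {l : List α} {S : Finset ℕ}

lemma mc_finite : {l : List α | SatChain (⊥ : α) ⊤ l}.Finite := by
  cases nonempty_fintype α
  apply Set.Finite.subset (List.finite_length_le α (Fintype.card α))
  intro l hl
  exact hl.nodup.length_le_card

lemma mc_filter_flag (hg : IsGraded rk) (htop : rk ⊤ = n) (h : SatChain (⊥ : α) ⊤ l)
    (hS : S ⊆ Finset.Icc 1 (n - 1)) :
    IsChain (· ≤ ·) (↑(l.toFinset.filter (fun z => rk z ∈ S)) : Set α) ∧
    (l.toFinset.filter (fun z => rk z ∈ S)).image rk = S ∧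
    (l.toFinset.filter (fun z => rk z ∈ S)).card = S.card ∧
    ∀ x ∈ l.toFinset.filter (fun z => rk z ∈ S), ⊥ < x ∧ x < ⊤ := by
  have hlen := mc_length hg htop h
  have hchain : IsChain (· ≤ ·) (↑(l.toFinset.filter (fun z => rk z ∈ S)) : Set α) := by
    intro a ha b hb hab
    simp only [Finset.coe_filter, Set.mem_setOf_eq, List.mem_toFinset] at ha hb
    obtain ⟨i, hi, rfl⟩ := h.mem_getElem ha.1
    obtain ⟨j, hj, rfl⟩ := h.mem_getElem hb.1
    rcases lt_trichotomy i j with hij | hij | hij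
    · exact Or.inl (h.lt_getElem hij hj).le
    · exact absurd (by congr 1) hab
    · exact Or.inr (h.lt_getElem hij hi).le
  have himg : (l.toFinset.filter (fun z => rk z ∈ S)).image rk = S := by
    apply Finset.Subset.antisymm
    · intro r hr
      simp only [Finset.mem_image, Finset.mem_filter] at hr
      obtain ⟨z, ⟨_, hz⟩, rfl⟩ := hr
      exact hz
    · intro r hr
      have hr' := Finset.mem_Icc.mp (hS hr)
      have hrn : r < l.length := by omega
      simp only [Finset.mem_image, Finset.mem_filter, List.mem_toFinset]
      exact ⟨l[r], ⟨List.getElem_mem _, by rw [mc_rank hg h hrn]; exact hr⟩,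
        mc_rank hg h hrn⟩
  have hcard : (l.toFinset.filter (fun z => rk z ∈ S)).card = S.card := by
    conv_rhs => rw [← himg]
    symm
    apply Finset.card_image_of_injOn
    intro a ha b hb hab
    simp only [Finset.coe_filter, Set.mem_setOf_eq, List.mem_toFinset] at ha hb
    exact mc_rank_injOn hg h ha.1 hb.1 hab
  refine ⟨hchain, himg, hcard, ?_⟩
  intro z hz
  simp only [Finset.mem_filter, List.mem_toFinset] at hz
  have hrz := Finset.mem_Icc.mp (hS hz.2)
  constructor
  · rcases eq_or_lt_of_le (bot_le (a := z)) with hb | hb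
    · exfalso
      have : rk z = 0 := by rw [← hb, hg.1]
      omega
    · exact hb
  · rcases eq_or_lt_of_le (le_top (a := z)) with hb | hb
    · exfalso
      have : rk z = n := by rw [hb, htop]
      omega
    · exact hb

/-- The sorted list of elements of a flag chain `c`. -/
noncomputable def flagList (rk : α → ℕ) (c : Finset α) (S : Finset ℕ) : List α :=
  (S.sort (· ≤ ·)).map (fun r =>
    if h : ∃ z ∈ c, rk z = r then h.choose else ⊥)

lemma flagList_spec (hτ : IsTripleAssignment τ) (hg : IsGraded rk)
    {c : Finset α} (hc1 : IsChain (· ≤ ·) (↑c : Set α)) (hc2 : c.image rk = S)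
    (hc3 : c.card = S.card) (hc4 : ∀ x ∈ c, ⊥ < x ∧ x < ⊤) :
    (∀ z ∈ flagList rk c S, z ∈ c ∧ rk z ∈ S) ∧
    (∀ z ∈ c, z ∈ flagList rk c S) ∧
    ((⊥ : α) :: flagList rk c S).Chain' (· < ·) ∧
    (flagList rk c S).Nodup := by
  have hinj : Set.InjOn rk ↑c := by
    rw [← Finset.card_image_iff]
    rw [hc2, hc3]
  have hpick : ∀ r ∈ S, (if h : ∃ z ∈ c, rk z = r then h.choose else ⊥) ∈ c ∧
      rk (if h : ∃ z ∈ c, rk z = r then h.choose else ⊥) = r := by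
    intro r hr
    rw [← hc2] at hr
    obtain ⟨z, hz, rfl⟩ := Finset.mem_image.mp hr
    have hex : ∃ w ∈ c, rk w = rk z := ⟨z, hz, rfl⟩
    rw [dif_pos hex]
    exact ⟨hex.choose_spec.1, hex.choose_spec.2⟩
  have hmono : ∀ r ∈ S, ∀ r' ∈ S, r < r' →
      (if h : ∃ z ∈ c, rk z = r then h.choose else ⊥) <
      (if h : ∃ z ∈ c, rk z = r' then h.choose else ⊥) := by
    intro r hr r' hr' hlt
    obtain ⟨hm, hrk⟩ := hpick r hr
    obtain ⟨hm', hrk'⟩ := hpick r' hr'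
    have hne : (if h : ∃ z ∈ c, rk z = r then h.choose else ⊥) ≠
        (if h : ∃ z ∈ c, rk z = r' then h.choose else ⊥) := by
      intro he
      rw [he, hrk'] at hrk
      omega
    rcases hc1 hm hm' hne with hle | hle
    · exact lt_of_le_of_ne hle hne
    · exfalso
      have := rk_lt_of_lt hτ hg.2 (lt_of_le_of_ne hle hne.symm)
      omega
  refine ⟨?_, ?_, ?_, ?_⟩
  · intro z hz
    simp only [flagList, List.mem_map] at hz
    obtain ⟨r, hr, rfl⟩ := hz
    rw [Finset.mem_sort] at hr
    exact ⟨(hpick r hr).1, by rw [(hpick r hr).2]; exact hr⟩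
  · intro z hz
    have hrz : rk z ∈ S := by rw [← hc2]; exact Finset.mem_image_of_mem _ hz
    have := (hpick (rk z) hrz)
    have hze : (if h : ∃ w ∈ c, rk w = rk z then h.choose else ⊥) = z :=
      hinj this.1 hz this.2
    simp only [flagList, List.mem_map]
    exact ⟨rk z, (Finset.mem_sort _).mpr hrz, hze⟩
  · have : IsTrans α (· < ·) := ⟨fun _ _ _ => lt_trans⟩
    refine List.isChain_iff_pairwise.mpr ?_
    apply List.Pairwise.cons
    · intro z hz
      simp only [flagList, List.mem_map] at hz
      obtain ⟨r, hr, rfl⟩ := hz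
      rw [Finset.mem_sort] at hr
      exact (hc4 _ (hpick r hr).1).1
    · rw [flagList, List.pairwise_map]
      refine List.Pairwise.imp_of_mem ?_ (Finset.sortedLT_sort S).pairwise
      intro a b ha hb hab
      rw [Finset.mem_sort] at ha hb
      exact hmono a ha b hb hab
  · rw [flagList]
    apply List.Nodup.map_on
    · intro a ha b hb hab
      rw [Finset.mem_sort] at ha hb
      by_contra hne
      rcases Nat.lt_or_ge a b with h' | h'
      · exact absurd hab (hmono a ha b hb h').ne
      · exact absurd hab.symm (hmono b hb a ha (by omega)).ne
    · exact Finset.sort_nodup _ _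

end Counting
section Bijection
variable {α : Type*} [PartialOrder α] [BoundedOrder α] [Finite α] [DecidableEq α]
variable {rk : α → ℕ} {n : ℕ} {τ : α → α → α → Bool} {l : List α} {S : Finset ℕ}

lemma psi_spec (hτ : IsTripleAssignment τ) (hg : IsGraded rk) (htop : rk ⊤ = n)
    (hS : S ⊆ Finset.Icc 1 (n - 1))
    {c : Finset α} (hc1 : IsChain (· ≤ ·) (↑c : Set α)) (hc2 : c.image rk = S)
    (hc3 : c.card = S.card) (hc4 : ∀ x ∈ c, ⊥ < x ∧ x < ⊤) :
    SatChain (⊥ : α) ⊤ (extChain τ hτ ⊥ (flagList rk c S)) ∧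
    descSet τ (extChain τ hτ ⊥ (flagList rk c S)) ⊆ S ∧
    (extChain τ hτ ⊥ (flagList rk c S)).toFinset.filter (fun z => rk z ∈ S) = c := by
  obtain ⟨hmem, hcmem, hch, hnodup⟩ := flagList_spec hτ hg hc1 hc2 hc3 hc4
  obtain ⟨hsat, hLmem, htriple⟩ :=
    extChain_spec hτ (flagList rk c S) ⊥ hch (fun z hz => (hc4 z (hmem z hz).1).2)
  set L := extChain τ hτ ⊥ (flagList rk c S) with hLdef
  have hdesc : descSet τ L ⊆ S := by
    intro i hi
    obtain ⟨h1, h2, p1, p2, p3, hf⟩ := (mc_mem_descSet_iff hsat).mp hi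
    have hf' : τ (L[i-1+0]'(by omega)) (L[i-1+1]'(by omega)) (L[i-1+2]'(by omega)) = false := by
      simp only [show i - 1 + 0 = i - 1 from by omega, show i - 1 + 1 = i from by omega,
        show i - 1 + 2 = i + 1 from by omega]
      exact hf
    simp only [Nat.add_zero] at hf'
    have := htriple (i - 1)
      (by have : L.length = (extChain τ hτ ⊥ (flagList rk c S)).length := rfl; omega) hf'
    simp only [show i - 1 + 1 = i from by omega] at this
    have hrk := (hmem _ this).2
    rwa [mc_rank hg hsat (by omega : i < L.length)] at hrk
  refine ⟨hsat, hdesc, ?_⟩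
  have hsub : c ⊆ L.toFinset.filter (fun z => rk z ∈ S) := by
    intro z hz
    rw [Finset.mem_filter, List.mem_toFinset]
    refine ⟨hLmem z (hcmem z hz), ?_⟩
    rw [← hc2]; exact Finset.mem_image_of_mem _ hz
  obtain ⟨-, -, hcard, -⟩ := mc_filter_flag hg htop hsat hS (S := S)
  exact (Finset.eq_of_subset_of_card_le hsub (by rw [hcard, hc3])).symm

lemma psi_phi (hτ : IsTripleAssignment τ) (hg : IsGraded rk) (htop : rk ⊤ = n)
    (hS : S ⊆ Finset.Icc 1 (n - 1)) (h : SatChain (⊥ : α) ⊤ l)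
    (hdesc : descSet τ l ⊆ S) :
    extChain τ hτ ⊥ (flagList rk (l.toFinset.filter (fun z => rk z ∈ S)) S) = l := by
  haveI : IsTrans α (· < ·) := ⟨fun _ _ _ => lt_trans⟩
  haveI : IsAntisymm α (· < ·) := ⟨fun a b h1 h2 => absurd h2 (lt_asymm h1)⟩
  obtain ⟨hc1, hc2, hc3, hc4⟩ := mc_filter_flag hg htop h hS
  set c := l.toFinset.filter (fun z => rk z ∈ S) with hcdef
  obtain ⟨hmem, hcmem, hch, hnodup⟩ := flagList_spec hτ hg hc1 hc2 hc3 hc4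
  set fl := flagList rk c S with hfldef
  -- fl equals the filtered list
  have hpl : l.Pairwise (· < ·) :=
    List.isChain_iff_pairwise.mp (List.IsChain.imp (fun a b hab => hab.lt) h.1)
  have hfleq : fl = l.filter (fun z => decide (rk z ∈ S)) := by
    refine (fun hp hs1 hs2 => List.Perm.eq_of_pairwise (le := (· < ·))
      (fun a b _ _ hab hba => absurd hba (lt_asymm hab)) hs1 hs2 hp) ?_ ?_ ?_
    · apply List.perm_of_nodup_nodup_toFinset_eq hnodup (h.nodup.filter _)
      rw [List.toFinset_filter]
      apply Finset.Subset.antisymm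
      · intro z hz
        rw [List.mem_toFinset] at hz
        have := hmem z hz
        rw [hcdef] at this
        simp only [Finset.mem_filter, List.mem_toFinset] at this ⊢
        simp only [decide_eq_true_eq]
        exact ⟨this.1.1, this.1.2⟩
      · intro z hz
        simp only [Finset.mem_filter, List.mem_toFinset, decide_eq_true_eq] at hz
        rw [List.mem_toFinset]
        apply hcmem
        rw [hcdef]
        simp only [Finset.mem_filter, List.mem_toFinset]
        exact hz
    · exact (List.isChain_iff_pairwise.mp hch).of_cons
    · exact List.Pairwise.sublist List.filter_sublist hpl
  -- apply decompose
  symm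
  apply decompose hτ fl ⊥ l h
  · exact List.isChain_iff_pairwise.mpr (List.isChain_iff_pairwise.mp hch).of_cons
  · intro z hz
    rw [hfleq, List.mem_filter, decide_eq_true_eq] at hz
    obtain ⟨hz1, hz2⟩ := hz
    have hge1 : 1 ≤ rk z := (Finset.mem_Icc.mp (hS hz2)).1
    have hzb : z ≠ ⊥ := by
      intro hzb
      rw [hzb, hg.1] at hge1
      omega
    have hne := h.ne_nil
    have hhead : l.head hne = ⊥ := by
      rw [List.head_eq_getElem]; exact h.getElem_zero h.length_pos
    have hcons := List.cons_head_tail hne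
    rw [← hcons] at hz1
    rcases List.mem_cons.mp hz1 with rfl | ht
    · exact absurd hhead hzb
    · exact ht
  · intro i hi
    rcases hb : τ (l[i]) (l[i+1]) (l[i+2]) with _ | _
    · left
      have hidesc : i + 1 ∈ descSet τ l := by
        rw [mc_mem_descSet_iff h]
        refine ⟨by omega, by omega, by omega, by omega, by omega, ?_⟩
        simp only [show i + 1 - 1 = i from by omega, show i + 1 + 1 = i + 2 from by omega]
        exact hb
      have hiS : i + 1 ∈ S := hdesc hidesc
      have : l[i+1] ∈ l.filter (fun z => decide (rk z ∈ S)) :=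
        List.mem_filter.mpr ⟨List.getElem_mem _,
          decide_eq_true (by rw [mc_rank hg h (by omega)]; exact hiS)⟩
      rw [hfleq]
      exact this
    · right
      simpa using hb

lemma flagF_eq_card (hτ : IsTripleAssignment τ) (hg : IsGraded rk) (htop : rk ⊤ = n)
    (hS : S ⊆ Finset.Icc 1 (n - 1)) :
    flagF rk S =
      ((mc_finite (α := α)).toFinset.filter (fun l => descSet τ l ⊆ S)).card := by
  rw [flagF]
  have hequiv : {c : Finset α // IsChain (· ≤ ·) (↑c : Set α) ∧ c.image rk = S ∧
      c.card = S.card ∧ ∀ x ∈ c, ⊥ < x ∧ x < ⊤} ≃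
      {l : List α //
        l ∈ (mc_finite (α := α)).toFinset.filter (fun l => descSet τ l ⊆ S)} := by
    refine
      { toFun := fun c => ⟨extChain τ hτ ⊥ (flagList rk c.1 S), ?_⟩
        invFun := fun l => ⟨l.1.toFinset.filter (fun z => rk z ∈ S), ?_⟩
        left_inv := ?_
        right_inv := ?_ }
    · obtain ⟨hc1, hc2, hc3, hc4⟩ := c.2
      obtain ⟨hsat, hdesc, -⟩ := psi_spec hτ hg htop hS hc1 hc2 hc3 hc4
      rw [Finset.mem_filter, Set.Finite.mem_toFinset]
      exact ⟨hsat, hdesc⟩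
    · have hl := l.2
      rw [Finset.mem_filter, Set.Finite.mem_toFinset] at hl
      exact mc_filter_flag hg htop hl.1 hS
    · rintro ⟨c, hc1, hc2, hc3, hc4⟩
      apply Subtype.ext
      exact (psi_spec hτ hg htop hS hc1 hc2 hc3 hc4).2.2
    · rintro ⟨l, hl⟩
      rw [Finset.mem_filter, Set.Finite.mem_toFinset] at hl
      apply Subtype.ext
      exact psi_phi hτ hg htop hS hl.1 hl.2
  rw [Nat.card_congr hequiv, Nat.card_eq_fintype_card, Fintype.card_coe]

end Bijection

section Inversion

lemma sum_powerset_neg_one_sub (W : Finset ℕ) :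
    ∑ V ∈ W.powerset, (-1 : ℤ) ^ (W.card - V.card) = if W = ∅ then 1 else 0 := by
  have hcongr : ∀ V ∈ W.powerset, (-1 : ℤ) ^ (W.card - V.card)
      = (-1) ^ W.card * (-1) ^ V.card := by
    intro V hV
    have hle := Finset.card_le_card (Finset.mem_powerset.mp hV)
    have h2 : W.card - V.card + 2 * V.card = W.card + V.card := by omega
    calc (-1 : ℤ) ^ (W.card - V.card)
        = (-1) ^ (W.card - V.card) * ((-1) ^ 2) ^ V.card := by norm_num
      _ = (-1) ^ (W.card - V.card + 2 * V.card) := by rw [← pow_mul, ← pow_add]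
      _ = (-1) ^ (W.card + V.card) := by rw [h2]
      _ = (-1) ^ W.card * (-1) ^ V.card := pow_add _ _ _
  rw [Finset.sum_congr rfl hcongr, ← Finset.mul_sum, Finset.sum_powerset_neg_one_pow_card]
  split_ifs with h
  · subst h; simp
  · simp

lemma inner_signed_sum (S U : Finset ℕ) (hU : U ⊆ S) :
    ∑ T ∈ S.powerset, (if U ⊆ T then (-1 : ℤ) ^ (S.card - T.card) else 0)
      = if U = S then 1 else 0 := by
  rw [← Finset.sum_filter]
  have hbij := Finset.sum_bij' (s := S.powerset.filter (fun T => U ⊆ T))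
    (t := (S \ U).powerset)
    (f := fun T => (-1 : ℤ) ^ (S.card - T.card))
    (g := fun V => (-1 : ℤ) ^ ((S \ U).card - V.card))
    (fun T _ => T \ U) (fun V _ => U ∪ V)
    (fun T hT => by
      rw [Finset.mem_powerset]
      rw [Finset.mem_filter, Finset.mem_powerset] at hT
      exact Finset.sdiff_subset_sdiff hT.1 Finset.Subset.rfl)
    (fun V hV => by
      rw [Finset.mem_powerset] at hV
      rw [Finset.mem_filter, Finset.mem_powerset]
      exact ⟨Finset.union_subset hU (hV.trans Finset.sdiff_subset), Finset.subset_union_left⟩)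
    (fun T hT => by
      rw [Finset.mem_filter] at hT
      exact Finset.union_sdiff_of_subset hT.2)
    (fun V hV => by
      rw [Finset.mem_powerset] at hV
      exact Finset.union_sdiff_cancel_left (Finset.disjoint_sdiff.mono_right hV))
    (fun T hT => by
      rw [Finset.mem_filter, Finset.mem_powerset] at hT
      have h1 : U.card ≤ T.card := Finset.card_le_card hT.2
      have h2 : T.card ≤ S.card := Finset.card_le_card hT.1
      show (-1 : ℤ) ^ (S.card - T.card) = (-1 : ℤ) ^ ((S \ U).card - (T \ U).card)
      rw [Finset.card_sdiff_of_subset hU, Finset.card_sdiff_of_subset hT.2]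
      congr 1
      omega)
  rw [hbij, sum_powerset_neg_one_sub]
  have : S \ U = ∅ ↔ U = S := by
    rw [Finset.sdiff_eq_empty_iff_subset]
    exact ⟨fun h => Finset.Subset.antisymm hU h, fun h => h ▸ Finset.Subset.rfl⟩
  split_ifs with h1 h2 h2
  · rfl
  · exact absurd (this.mp h1) h2
  · exact absurd (this.mpr h2) h1
  · rfl

lemma powerset_inversion (g : Finset ℕ → ℤ) (S : Finset ℕ) :
    ∑ T ∈ S.powerset, (-1 : ℤ) ^ (S.card - T.card) * (∑ U ∈ T.powerset, g U) = g S := by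
  have step1 : ∀ T ∈ S.powerset, (-1 : ℤ) ^ (S.card - T.card) * (∑ U ∈ T.powerset, g U)
      = ∑ U ∈ S.powerset, (if U ⊆ T then (-1 : ℤ) ^ (S.card - T.card) * g U else 0) := by
    intro T hT
    rw [Finset.mem_powerset] at hT
    rw [Finset.mul_sum, ← Finset.sum_filter]
    have : S.powerset.filter (fun U => U ⊆ T) = T.powerset := by
      ext U
      rw [Finset.mem_filter, Finset.mem_powerset, Finset.mem_powerset]
      exact ⟨fun h => h.2, fun h => ⟨h.trans hT, h⟩⟩
    rw [this]
  rw [Finset.sum_congr rfl step1, Finset.sum_comm]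
  have step2 : ∀ U ∈ S.powerset,
      ∑ T ∈ S.powerset, (if U ⊆ T then (-1 : ℤ) ^ (S.card - T.card) * g U else 0)
      = (if U = S then 1 else 0) * g U := by
    intro U hU
    have hsplit : ∀ T, (if U ⊆ T then (-1 : ℤ) ^ (S.card - T.card) * g U else 0)
        = (if U ⊆ T then (-1 : ℤ) ^ (S.card - T.card) else 0) * g U := by
      intro T
      split_ifs <;> simp
    rw [Finset.sum_congr rfl (fun T _ => hsplit T), ← Finset.sum_mul,
      inner_signed_sum S U (Finset.mem_powerset.mp hU)]
  rw [Finset.sum_congr rfl step2]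
  rw [Finset.sum_eq_single S (fun U _ hne => by rw [if_neg hne, zero_mul])
    (fun h => absurd (Finset.mem_powerset_self S) h)]
  rw [if_pos rfl, one_mul]

end Inversion

section Assembly
variable {α : Type*} [PartialOrder α] [BoundedOrder α] [Finite α] [DecidableEq α]
variable {rk : α → ℕ} {n : ℕ} {τ : α → α → α → Bool} {S : Finset ℕ}

lemma card_filter_partition (F : Finset (List α)) (T : Finset ℕ) :
    (F.filter (fun l => descSet τ l ⊆ T)).card
      = ∑ U ∈ T.powerset, (F.filter (fun l => descSet τ l = U)).card := by
  have hmaps : ∀ l ∈ F.filter (fun l => descSet τ l ⊆ T), descSet τ l ∈ T.powerset := by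
    intro l hl
    rw [Finset.mem_powerset]
    exact (Finset.mem_filter.mp hl).2
  rw [Finset.card_eq_sum_ones, ← Finset.sum_fiberwise_of_maps_to hmaps (fun _ => (1 : ℕ))]
  apply Finset.sum_congr rfl
  intro U hU
  rw [Finset.mem_powerset] at hU
  have hff : (F.filter (fun l => descSet τ l ⊆ T)).filter (fun l => descSet τ l = U)
      = F.filter (fun l => descSet τ l = U) := by
    rw [Finset.filter_filter]
    apply Finset.filter_congr
    intro l _
    constructor
    · exact fun h => h.2
    · exact fun h => ⟨h ▸ hU, h⟩
  rw [hff]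
  exact (Finset.card_eq_sum_ones _).symm

lemma flagH_eq (hτ : IsTripleAssignment τ) (hg : IsGraded rk) (htop : rk ⊤ = n)
    (hS : S ⊆ Finset.Icc 1 (n - 1)) :
    flagH rk S =
      (((mc_finite (α := α)).toFinset.filter (fun l => descSet τ l = S)).card : ℤ) := by
  rw [flagH]
  have hst : ∀ T ∈ S.powerset, (-1 : ℤ) ^ (S.card - T.card) * (flagF rk T : ℤ)
      = (-1 : ℤ) ^ (S.card - T.card) *
        ∑ U ∈ T.powerset,
          (((mc_finite (α := α)).toFinset.filter (fun l => descSet τ l = U)).card : ℤ) := by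
    intro T hT
    rw [Finset.mem_powerset] at hT
    rw [flagF_eq_card hτ hg htop (hT.trans hS), card_filter_partition]
    push_cast
    ring
  rw [Finset.sum_congr rfl hst]
  exact powerset_inversion _ S

end Assembly
theorem abIndex_eq_sum_weights' {α : Type*} [PartialOrder α] [BoundedOrder α] [Finite α]
    (rk : α → ℕ) (n : ℕ) (hg : IsGraded rk) (htop : rk ⊤ = n)
    (τ : α → α → α → Bool) (hτ : IsTripleAssignment τ) :
    abIndex rk n = ∑ᶠ (l : List α) (_ : SatChain (⊥ : α) ⊤ l),
      MonoidAlgebra.single (chainWeight τ l) (1 : ℤ) := by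
  letI := Classical.decEq α
  have hfin := mc_finite (α := α)
  have hRHS : (∑ᶠ (l : List α) (_ : SatChain (⊥ : α) ⊤ l),
      MonoidAlgebra.single (chainWeight τ l) (1 : ℤ))
      = ∑ l ∈ hfin.toFinset, MonoidAlgebra.single (chainWeight τ l) (1 : ℤ) :=
    finsum_mem_eq_finite_toFinset_sum _ hfin
  rw [hRHS, abIndex]
  rw [← Finset.sum_fiberwise_of_maps_to (g := descSet τ) (t := (Finset.Icc 1 (n-1)).powerset)
    (fun l hl => Finset.mem_powerset.mpr
      (mc_descSet_subset hg htop (hfin.mem_toFinset.mp hl)))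
    (fun l => MonoidAlgebra.single (chainWeight τ l) (1 : ℤ))]
  apply Finset.sum_congr rfl
  intro S hS
  rw [flagH_eq hτ hg htop (Finset.mem_powerset.mp hS)]
  have hterm : ∀ l ∈ hfin.toFinset.filter (fun l => descSet τ l = S),
      MonoidAlgebra.single (chainWeight τ l) (1 : ℤ)
        = MonoidAlgebra.single (abMonomial n S) (1 : ℤ) := by
    intro l hl
    rw [Finset.mem_filter] at hl
    have hsat := hfin.mem_toFinset.mp hl.1
    rw [mc_weight_eq hg htop hsat, hl.2]
  rw [Finset.sum_congr rfl hterm, Finset.sum_const]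
  have : ∀ (m : FreeMonoid Bool) (k : ℕ),
      k • MonoidAlgebra.single m (1 : ℤ) = MonoidAlgebra.single m (k : ℤ) := by
    intro m k
    have := MonoidAlgebra.smul_single (k) (m) ((1 : ℤ))
    rw [this]
    norm_num
  rw [this]

/-- If a graded poset `P` admits a triple assignment `τ`, then its
𝐚𝐛-index equals the sum over all maximal chains `c` of the weight `wt(c)`, the
𝐚𝐛-monomial recording the values of `τ` on consecutive triples of `c`. -/
theorem abIndex_eq_sum_weights {α : Type*} [PartialOrder α] [BoundedOrder α] [Finite α]
    (rk : α → ℕ) (n : ℕ) (hg : IsGraded rk) (htop : rk ⊤ = n)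
    (τ : α → α → α → Bool) (hτ : IsTripleAssignment τ) :
    abIndex rk n = ∑ᶠ (l : List α) (_ : SatChain (⊥ : α) ⊤ l),
      MonoidAlgebra.single (chainWeight τ l) (1 : ℤ) := by
  exact abIndex_eq_sum_weights' rk n hg htop τ hτ
end
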